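/- Let m > 1, p > max{m-1,1}, q = mp/(p+1), a > 0, u > 0, and M₊ = (p+1)(p-1)^{(p-1)/(p+1)}/(4ap)^{p/(p+1)}. Then for every Z ≥ 0 (with Z = |∇u| treated as a nonnegative real), (u^p Z^{2-m} + M₊ Z^{q-m+2})² - (p/a) u^{p-1} Z^{4-m} ≥ 0 for all Z > 0. -/

import Mathlib

open Real

theorem stmt5 (m p a u q Mplus : ℝ) (hm : 1 < m) (hpm : m - 1 < p) (hp1 : 1 < p)
    (ha : 0 < a) (hu : 0 < u)
    (hq : q = m * p / (p + 1))
    (hM : Mplus = (p + 1) * (p - 1) ^ ((p - 1) / (p + 1)) / (4 * a * p) ^ (p / (p + 1))) :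
    ∀ Z : ℝ, 0 < Z →
      0 ≤ (u ^ p * Z ^ (2 - m) + Mplus * Z ^ (q - m + 2)) ^ 2
          - (p / a) * u ^ (p - 1) * Z ^ (4 - m) := by
  intro Z hZ
  have hp : (0:ℝ) < p := lt_trans one_pos hp1
  have hs : (0:ℝ) < p - 1 := by linarith
  have ht : (0:ℝ) < p + 1 := by linarith
  have hM0 : 0 < Mplus := by rw [hM]; positivity
  set A : ℝ := (p - 1) / (2 * p) with hA
  set B : ℝ := (p + 1) / (2 * p) with hB
  have hA0 : 0 ≤ A := by positivity
  have hB0 : 0 ≤ B := by positivity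
  have hAB : A + B = 1 := by rw [hA, hB, ← add_div, div_eq_one_iff_eq (by positivity)]; ring
  set lam : ℝ := 2 * p / (p - 1) with hlam
  set mu : ℝ := 2 * p * Mplus / (p + 1) with hmu
  have hlam0 : 0 < lam := by positivity
  have hmu0 : 0 < mu := by positivity
  set c : ℝ := (p / a) ^ ((1:ℝ)/2) with hc
  have hc0 : 0 < c := by positivity
  have hlogM : Real.log Mplus = Real.log (p + 1) + (p - 1) / (p + 1) * Real.log (p - 1)
      - p / (p + 1) * (Real.log 2 + Real.log 2 + Real.log a + Real.log p) := by
    rw [hM, Real.log_div (by positivity) (by positivity),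
      Real.log_mul (by positivity) (by positivity),
      Real.log_rpow hs, Real.log_rpow (by positivity),
      show (4 * a * p : ℝ) = 2 * 2 * a * p by ring,
      Real.log_mul (by positivity) hp.ne', Real.log_mul (by positivity) ha.ne',
      Real.log_mul (by norm_num) (by norm_num)]
  have hloglam : Real.log lam = Real.log 2 + Real.log p - Real.log (p - 1) := by
    rw [hlam, Real.log_div (by positivity) hs.ne', Real.log_mul (by norm_num) hp.ne']
  have hlogmu : Real.log mu = Real.log 2 + Real.log p + Real.log Mplus - Real.log (p + 1) := by
    rw [hmu, Real.log_div (by positivity) ht.ne',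
      Real.log_mul (by positivity) hM0.ne', Real.log_mul (by norm_num) hp.ne']
  -- key constant identity: lam^A * mu^B = c
  have hK : lam ^ A * mu ^ B = c := by
    have h1 : 0 < lam ^ A * mu ^ B := by positivity
    have hlog : Real.log (lam ^ A * mu ^ B) = Real.log c := by
      rw [Real.log_mul (by positivity) (by positivity),
        Real.log_rpow hlam0, Real.log_rpow hmu0, hc,
        Real.log_rpow (by positivity), Real.log_div hp.ne' ha.ne',
        hloglam, hlogmu, hlogM, hA, hB]
      field_simp
      ring
    calc lam ^ A * mu ^ B = Real.exp (Real.log (lam ^ A * mu ^ B)) := (Real.exp_log h1).symm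
      _ = Real.exp (Real.log c) := by rw [hlog]
      _ = c := Real.exp_log hc0
  -- AM-GM
  set S : ℝ := u ^ p + Mplus * Z ^ q with hS
  set D : ℝ := c * u ^ ((p - 1) / 2) * Z ^ (m / 2) with hD
  have hD0 : 0 ≤ D := by positivity
  have hSD : D ≤ S := by
    have amgm := Real.geom_mean_le_arith_mean2_weighted hA0 hB0
      (le_of_lt (by positivity : (0:ℝ) < lam * u ^ p))
      (le_of_lt (by positivity : (0:ℝ) < mu * Z ^ q)) hAB
    have hAl : A * lam = 1 := by rw [hA, hlam]; field_simp
    have hBm : B * mu = Mplus := by rw [hB, hmu]; field_simp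
    have hrhs : A * (lam * u ^ p) + B * (mu * Z ^ q) = S := by
      rw [show A * (lam * u ^ p) + B * (mu * Z ^ q)
          = (A * lam) * u ^ p + (B * mu) * Z ^ q by ring, hAl, hBm, hS]
      ring
    have hpA : p * A = (p - 1) / 2 := by rw [hA]; field_simp
    have hqB : q * B = m / 2 := by rw [hq, hB]; field_simp
    have hlhs : (lam * u ^ p) ^ A * (mu * Z ^ q) ^ B = D := by
      rw [Real.mul_rpow hlam0.le (by positivity), Real.mul_rpow hmu0.le (by positivity),
        ← Real.rpow_mul hu.le, ← Real.rpow_mul hZ.le, hpA, hqB, hD, ← hK]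
      ring
    rw [hrhs, hlhs] at amgm
    exact amgm
  -- factorization
  have e1 : Z ^ (q - m + 2) = Z ^ q * Z ^ (2 - m) := by
    rw [← Real.rpow_add hZ]; congr 1; ring
  have e2 : Z ^ (4 - m) = Z ^ m * Z ^ (2 - m) * Z ^ (2 - m) := by
    rw [← Real.rpow_add hZ, ← Real.rpow_add hZ]; congr 1; ring
  have e3 : D ^ 2 = (p / a) * u ^ (p - 1) * Z ^ m := by
    rw [hD]
    rw [show (c * u ^ ((p - 1) / 2) * Z ^ (m / 2)) ^ 2 =
      (c * c) * (u ^ ((p - 1) / 2) * u ^ ((p - 1) / 2)) * (Z ^ (m / 2) * Z ^ (m / 2)) by ring]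
    rw [← Real.rpow_add hu, ← Real.rpow_add hZ, hc, ← Real.rpow_add (by positivity)]
    norm_num
  have key : (u ^ p * Z ^ (2 - m) + Mplus * Z ^ (q - m + 2)) ^ 2
      - (p / a) * u ^ (p - 1) * Z ^ (4 - m)
      = (Z ^ (2 - m)) ^ 2 * (S ^ 2 - D ^ 2) := by
    rw [e1, e2, hS]
    rw [e3]  -- substitutes? D^2 appears on RHS only
    ring
  rw [key]
  have h2 : 0 ≤ S ^ 2 - D ^ 2 := by
    calc (0:ℝ) ≤ (S - D) * (S + D) :=
          mul_nonneg (sub_nonneg.2 hSD) (add_nonneg (hD0.trans hSD) hD0)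
      _ = S ^ 2 - D ^ 2 := by ring
  positivity
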